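/- For all g₁, g₂ in SL(2,ℂ), the trace of the group commutator satisfies tr(g₁ g₂ g₁⁻¹ g₂⁻¹) = 2 + 4·Θ(X₁, X₂, X₃), where X₁ = tr(g₁)/2, X₂ = tr(g₂)/2, X₃ = tr(g₁g₂)/2. -/

import Mathlib

open Matrix
open scoped MatrixGroups

/-- `Θ(X₁,X₂,X₃) := (X₃ − X₁X₂)² − (X₁² − 1)(X₂² − 1)`. -/
def Theta (X₁ X₂ X₃ : ℂ) : ℂ := (X₃ - X₁ * X₂) ^ 2 - (X₁ ^ 2 - 1) * (X₂ ^ 2 - 1)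

/-- For all `g₁, g₂ ∈ SL(2,ℂ)`,
`tr(g₁ g₂ g₁⁻¹ g₂⁻¹) = 2 + 4·Θ(X₁, X₂, X₃)` where `Xᵢ` are the half traces. -/
theorem trace_commutator_eq (g₁ g₂ : SL(2, ℂ)) :
    Matrix.trace ((g₁ * g₂ * g₁⁻¹ * g₂⁻¹ : SL(2, ℂ)) : Matrix (Fin 2) (Fin 2) ℂ) =
      2 + 4 * Theta (Matrix.trace ((g₁ : Matrix (Fin 2) (Fin 2) ℂ)) / 2)
        (Matrix.trace ((g₂ : Matrix (Fin 2) (Fin 2) ℂ)) / 2)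
        (Matrix.trace (((g₁ * g₂ : SL(2, ℂ)) : Matrix (Fin 2) (Fin 2) ℂ)) / 2) := by
  have h₁ := g₁.2
  have h₂ := g₂.2
  rw [Matrix.det_fin_two] at h₁ h₂
  simp only [Matrix.SpecialLinearGroup.coe_mul, Matrix.SpecialLinearGroup.coe_inv,
    Matrix.adjugate_fin_two]
  simp only [Matrix.SpecialLinearGroup.coe_mul, Theta, Matrix.trace_fin_two, Matrix.mul_apply,
    Fin.sum_univ_two]
  simp only [Matrix.of_apply, Matrix.cons_val_zero, Matrix.cons_val_one, Matrix.head_cons, Matrix.head_fin_const,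
    Matrix.cons_val', Matrix.empty_val', Matrix.cons_val_fin_one]
  linear_combination (g₂.1 0 0 ^ 2 + 2 * g₂.1 0 0 * g₂.1 1 1 + g₂.1 1 1 ^ 2 - 2) * h₁ +
    (g₁.1 0 0 ^ 2 + 2 * g₁.1 0 1 * g₁.1 1 0 + g₁.1 1 1 ^ 2) * h₂
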